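/- Let λ ≥ 0, a ≥ 0 and c ∈ (0, 1/4), and set γ = a·(1/4 − c)^{−1}. Then there exists a constant C > 0, depending only on λ, a and c, such that for every t > 0: ∫₀^∞ (r^{λ+1}/t) · exp( −r²/(4t) + a·r ) dr ≤ C · t^{λ/2} · e^{a·γ·t}. -/

import Mathlib

open MeasureTheory

/-- Pointwise exponent bound: `-r²/(4t) + ar ≤ aγt - 2·(c/(2t))·r²`. -/
theorem gaussian_drift_stepA (a c t r : ℝ) (ha : 0 ≤ a) (hc0 : 0 < c) (hc4 : c < 1/4)
    (ht : 0 < t) (hr : 0 < r) :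
    -r ^ 2 / (4 * t) + a * r ≤ a * (a * (1/4 - c)⁻¹) * t - 2 * (c / (2 * t)) * r ^ 2 := by
  have hb : (0:ℝ) < 1/4 - c := by linarith
  have hb' : (1/4 - c) ≠ 0 := ne_of_gt hb
  have h1 : (1 - 4*c) ≠ 0 := by intro h; apply hb'; linarith
  have ht' : t ≠ 0 := ne_of_gt ht
  have h : a * (a * (1/4 - c)⁻¹) * t - 2 * (c / (2 * t)) * r ^ 2 - (-r ^ 2 / (4 * t) + a * r)
      = ((1/4 - c) * r - a * t)^2 / ((1/4 - c) * t) + a * r := by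
    field_simp
    ring
  nlinarith [div_nonneg (sq_nonneg ((1/4 - c) * r - a * t)) (le_of_lt (mul_pos hb ht)),
    mul_nonneg ha hr.le]

/-- Pointwise power bound: `r^{λ+1} ≤ K t^{(λ+1)/2} e^{(c/(2t)) r²}`. -/
theorem gaussian_drift_stepB (lam c t r : ℝ) (hlam : 0 ≤ lam) (hc0 : 0 < c)
    (ht : 0 < t) (hr : 0 < r) :
    r ^ (lam + 1) ≤ Real.exp ((lam + 1)^2 / (2 * c)) * t ^ ((lam + 1)/2)
      * Real.exp (c / (2 * t) * r ^ 2) := by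
  have hst : 0 < Real.sqrt t := Real.sqrt_pos.2 ht
  set x := r / Real.sqrt t with hxdef
  have hx : 0 < x := div_pos hr hst
  have hrx : r = Real.sqrt t * x := by rw [hxdef]; field_simp
  have hx2 : c / (2 * t) * r ^ 2 = c / 2 * x ^ 2 := by
    rw [hrx, mul_pow, Real.sq_sqrt ht.le]
    field_simp
  have hxpow : x ^ (lam + 1) ≤ Real.exp ((lam + 1)^2 / (2 * c)) * Real.exp (c / 2 * x ^ 2) := by
    rcases le_total x 1 with hx1 | hx1
    · have h1 : x ^ (lam + 1) ≤ 1 := Real.rpow_le_one hx.le hx1 (by linarith)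
      have h2 : (1:ℝ) ≤ Real.exp ((lam + 1)^2 / (2 * c)) := Real.one_le_exp (by positivity)
      have h3 : (1:ℝ) ≤ Real.exp (c / 2 * x ^ 2) := Real.one_le_exp (by positivity)
      nlinarith
    · have hlog : Real.log x ≤ x := (Real.log_le_sub_one_of_pos hx).trans (by linarith)
      have h1 : x ^ (lam + 1) = Real.exp ((lam + 1) * Real.log x) := by
        rw [Real.rpow_def_of_pos hx]; ring_nf
      have h2 : (lam + 1) * Real.log x ≤ (lam + 1)^2 / (2 * c) + c / 2 * x ^ 2 := by
        have h3 : (lam + 1) * Real.log x ≤ (lam + 1) * x :=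
          mul_le_mul_of_nonneg_left hlog (by linarith)
        have heq : (lam + 1)^2 / (2*c) + c/2 * x^2 - (lam + 1) * x
            = ((lam + 1) - c * x)^2 / (2*c) := by
          field_simp
          ring
        nlinarith [div_nonneg (sq_nonneg ((lam + 1) - c * x)) (by positivity : (0:ℝ) ≤ 2*c)]
      rw [h1, ← Real.exp_add]
      exact Real.exp_le_exp.2 h2
  calc r ^ (lam + 1) = (Real.sqrt t * x) ^ (lam + 1) := by rw [← hrx]
    _ = (Real.sqrt t) ^ (lam + 1) * x ^ (lam + 1) := Real.mul_rpow hst.le hx.le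
    _ = t ^ ((lam + 1)/2) * x ^ (lam + 1) := by
        rw [Real.sqrt_eq_rpow, ← Real.rpow_mul ht.le]
        congr 1
        ring
    _ ≤ t ^ ((lam + 1)/2) * (Real.exp ((lam + 1)^2 / (2 * c)) * Real.exp (c / 2 * x ^ 2)) := by
        apply mul_le_mul_of_nonneg_left hxpow (Real.rpow_nonneg ht.le _)
    _ = Real.exp ((lam + 1)^2 / (2 * c)) * t ^ ((lam + 1)/2) * Real.exp (c / (2 * t) * r ^ 2) := by
        rw [hx2]; ring

/-- The Gaussian-with-linear-drift moment estimate
`∫₀^∞ (r^{λ+1}/t) e^{-r²/(4t) + ar} dr ≤ C t^{λ/2} e^{aγt}` with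
`γ = a(1/4 - c)⁻¹`, used in the dispersive heat semigroup bounds. -/
theorem gaussian_drift_moment
    (lam a c : ℝ) (hlam : 0 ≤ lam) (ha : 0 ≤ a) (hc0 : 0 < c) (hc4 : c < 1 / 4) :
    ∃ C > (0 : ℝ), ∀ t > (0 : ℝ),
      ∫⁻ r in Set.Ioi (0 : ℝ),
          ENNReal.ofReal (r ^ (lam + 1) / t * Real.exp (-r ^ 2 / (4 * t) + a * r)) ≤
        ENNReal.ofReal (C * t ^ (lam / 2) * Real.exp (a * (a * (1 / 4 - c)⁻¹) * t)) := by
  refine ⟨Real.exp ((lam + 1)^2 / (2 * c)) * Real.sqrt (2 * Real.pi / c), by positivity, ?_⟩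
  intro t ht
  set γ := a * (1 / 4 - c)⁻¹ with hγ
  set D := Real.exp ((lam + 1)^2 / (2 * c)) * t ^ ((lam - 1)/2) * Real.exp (a * γ * t) with hD
  have hDnn : 0 ≤ D := by positivity
  have hpt : ∀ r ∈ Set.Ioi (0:ℝ),
      ENNReal.ofReal (r ^ (lam + 1) / t * Real.exp (-r ^ 2 / (4 * t) + a * r)) ≤
      ENNReal.ofReal D * ENNReal.ofReal (Real.exp (-(c / (2 * t)) * r ^ 2)) := by
    intro r hr
    rw [Set.mem_Ioi] at hr
    rw [← ENNReal.ofReal_mul hDnn]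
    apply ENNReal.ofReal_le_ofReal
    have h1 := gaussian_drift_stepA a c t r ha hc0 hc4 ht hr
    have h2 := gaussian_drift_stepB lam c t r hlam hc0 ht hr
    have hbound : r ^ (lam + 1) / t * Real.exp (-r ^ 2 / (4 * t) + a * r)
        ≤ (Real.exp ((lam + 1)^2 / (2 * c)) * t ^ ((lam + 1)/2)
            * Real.exp (c / (2 * t) * r ^ 2)) / t
          * Real.exp (a * γ * t - 2 * (c / (2 * t)) * r ^ 2) := by
      apply mul_le_mul (by gcongr) (Real.exp_le_exp.2 h1) (Real.exp_pos _).le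
      positivity
    refine hbound.trans (le_of_eq ?_)
    have hpow : t ^ ((lam + 1)/2) / t = t ^ ((lam - 1)/2) := by
      rw [show (lam - 1)/2 = (lam + 1)/2 - 1 by ring, Real.rpow_sub ht, Real.rpow_one]
    have hexp : Real.exp (c / (2 * t) * r ^ 2)
        * Real.exp (a * γ * t - 2 * (c / (2 * t)) * r ^ 2)
        = Real.exp (a * γ * t) * Real.exp (-(c / (2 * t)) * r ^ 2) := by
      rw [← Real.exp_add, ← Real.exp_add]; congr 1; ring
    calc Real.exp ((lam + 1)^2 / (2 * c)) * t ^ ((lam + 1)/2)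
            * Real.exp (c / (2 * t) * r ^ 2) / t
          * Real.exp (a * γ * t - 2 * (c / (2 * t)) * r ^ 2)
        = Real.exp ((lam + 1)^2 / (2 * c)) * (t ^ ((lam + 1)/2) / t)
          * (Real.exp (c / (2 * t) * r ^ 2)
            * Real.exp (a * γ * t - 2 * (c / (2 * t)) * r ^ 2)) := by ring
      _ = D * Real.exp (-(c / (2 * t)) * r ^ 2) := by rw [hpow, hexp, hD]; ring
  calc ∫⁻ r in Set.Ioi (0:ℝ),
        ENNReal.ofReal (r ^ (lam + 1) / t * Real.exp (-r ^ 2 / (4 * t) + a * r))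
      ≤ ∫⁻ r in Set.Ioi (0:ℝ),
          ENNReal.ofReal D * ENNReal.ofReal (Real.exp (-(c / (2 * t)) * r ^ 2)) := by
        apply setLIntegral_mono (by fun_prop) hpt
    _ = ENNReal.ofReal D * ∫⁻ r in Set.Ioi (0:ℝ),
          ENNReal.ofReal (Real.exp (-(c / (2 * t)) * r ^ 2)) := by
        rw [lintegral_const_mul' _ _ ENNReal.ofReal_ne_top]
    _ ≤ ENNReal.ofReal D * ∫⁻ r : ℝ,
          ENNReal.ofReal (Real.exp (-(c / (2 * t)) * r ^ 2)) :=
        mul_le_mul_right (setLIntegral_le_lintegral _ _) _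
    _ = ENNReal.ofReal D * ENNReal.ofReal (∫ r : ℝ, Real.exp (-(c / (2 * t)) * r ^ 2)) := by
        rw [← ofReal_integral_eq_lintegral_ofReal
          (integrable_exp_neg_mul_sq (by positivity))
          (Filter.Eventually.of_forall fun x => (Real.exp_pos _).le)]
    _ ≤ ENNReal.ofReal (Real.exp ((lam + 1)^2 / (2 * c)) * Real.sqrt (2 * Real.pi / c)
          * t ^ (lam / 2) * Real.exp (a * γ * t)) := by
        rw [integral_gaussian, ← ENNReal.ofReal_mul hDnn]
        apply ENNReal.ofReal_le_ofReal
        apply le_of_eq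
        have h1 : Real.pi / (c / (2 * t)) = 2 * Real.pi / c * t := by field_simp
        have hpow2 : t ^ ((lam - 1)/2) * t ^ ((1:ℝ)/2) = t ^ (lam/2) := by
          rw [← Real.rpow_add ht]; congr 1; ring
        rw [hD, h1, Real.sqrt_mul (by positivity) t, Real.sqrt_eq_rpow t, ← hpow2]
        ring
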